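/- Suppose c 0 = 0, c k ≠ 0 and s k > 1 for every k ≠ 0, and set d = ∑_{k ≠ 0} (c k)^2/(s k − 1)^2. If d > 1, then every global minimiser x* of the SCQP objective F over the unit sphere {x : ∑ k, (x k)^2 = 1} satisfies x* 0 = 0. -/

import Mathlib

private lemma sum_pair_split {n : ℕ} {i j : Fin n} (h : i ≠ j) (f : Fin n → ℝ) :
    ∑ x, f x = f i + (f j + ∑ x ∈ (Finset.univ.erase i).erase j, f x) := by
  rw [Finset.add_sum_erase _ f (Finset.mem_erase.2 ⟨h.symm, Finset.mem_univ j⟩),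
      Finset.add_sum_erase _ f (Finset.mem_univ i)]

theorem scqp_c0_zero_d_gt_one_first_coord_vanishes (M : ℕ) (s c : Fin (M + 2) → ℝ)
    (hs : Monotone s) (hs0 : s 0 = 1)
    (hc : ∑ k, (c k) ^ 2 = 1)
    (hc0 : c 0 = 0)
    (hck : ∀ k : Fin (M + 2), k ≠ 0 → c k ≠ 0)
    (hsgt : ∀ k : Fin (M + 2), k ≠ 0 → 1 < s k)
    (d : ℝ)
    (hd_def : d = ∑ k ∈ Finset.univ.filter (fun k : Fin (M + 2) => k ≠ 0),
        (c k) ^ 2 / (s k - 1) ^ 2)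
    (hd : 1 < d) :
    ∀ xstar : Fin (M + 2) → ℝ, ∑ k, (xstar k) ^ 2 = 1 →
      (∀ x : Fin (M + 2) → ℝ, ∑ k, (x k) ^ 2 = 1 →
        (1 / 2 : ℝ) * ∑ k, s k * (xstar k) ^ 2 + ∑ k, c k * xstar k ≤
          (1 / 2 : ℝ) * ∑ k, s k * (x k) ^ 2 + ∑ k, c k * x k) →
      xstar 0 = 0 := by
  intro xstar hsph hmin
  by_contra ha
  set a := xstar 0 with ha_def
  have key : ∀ k : Fin (M + 2), k ≠ 0 → xstar k = -(c k) / (s k - 1) := by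
    intro k hk
    set b := xstar k with hb_def
    have hsk := hsgt k hk
    have hs1 : (0:ℝ) < s k - 1 := by linarith
    set A : ℝ → ℝ := fun t => a * Real.cos t - b * Real.sin t with hA_def
    set B : ℝ → ℝ := fun t => a * Real.sin t + b * Real.cos t with hB_def
    set y : ℝ → Fin (M+2) → ℝ :=
      fun t => Function.update (Function.update xstar 0 (A t)) k (B t) with hy_def
    have hk0 : (0 : Fin (M+2)) ≠ k := Ne.symm hk
    have hy0 : ∀ t, y t 0 = A t := by
      intro t
      simp [hy_def, Function.update_apply, hk0, hk0.symm]
    have hyk : ∀ t, y t k = B t := by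
      intro t; simp [hy_def]
    have hyrest : ∀ t, ∀ j ∈ (Finset.univ.erase (0 : Fin (M+2))).erase k,
        y t j = xstar j := by
      intro t j hj
      have hjk := (Finset.mem_erase.1 hj).1
      have hj0 := (Finset.mem_erase.1 (Finset.mem_erase.1 hj).2).1
      simp [hy_def, Function.update_apply, hjk, hj0]
    have htrig : ∀ t, A t ^ 2 + B t ^ 2 = a ^ 2 + b ^ 2 := by
      intro t
      have := Real.sin_sq_add_cos_sq t
      simp only [hA_def, hB_def]
      nlinarith [this]
    have hA0 : A 0 = a := by simp [hA_def]
    have hB0 : B 0 = b := by simp [hB_def]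
    -- sphere constraint for y t
    have hysph : ∀ t, ∑ j, (y t j) ^ 2 = 1 := by
      intro t
      rw [sum_pair_split hk0 (fun j => (y t j) ^ 2), hy0, hyk]
      rw [sum_pair_split hk0 (fun j => (xstar j) ^ 2)] at hsph
      have hrest : ∑ j ∈ (Finset.univ.erase (0 : Fin (M+2))).erase k, (y t j) ^ 2
          = ∑ j ∈ (Finset.univ.erase (0 : Fin (M+2))).erase k, (xstar j) ^ 2 :=
        Finset.sum_congr rfl (fun j hj => by rw [hyrest t j hj])
      rw [hrest]
      have := htrig t
      linarith [hsph]
    -- the one-dimensional objective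
    set g : ℝ → ℝ := fun t => (1/2) * (s k - 1) * (B t) ^ 2 + c k * B t with hg_def
    have hglobal : ∀ t, g 0 ≤ g t := by
      intro t
      have h := hmin (y t) (hysph t)
      rw [sum_pair_split hk0 (fun j => s j * (y t j) ^ 2),
          sum_pair_split hk0 (fun j => c j * (y t j)),
          sum_pair_split hk0 (fun j => s j * (xstar j) ^ 2),
          sum_pair_split hk0 (fun j => c j * (xstar j))] at h
      rw [hy0, hyk] at h
      have hrest1 : ∑ j ∈ (Finset.univ.erase (0 : Fin (M+2))).erase k, s j * (y t j) ^ 2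
          = ∑ j ∈ (Finset.univ.erase (0 : Fin (M+2))).erase k, s j * (xstar j) ^ 2 :=
        Finset.sum_congr rfl (fun j hj => by rw [hyrest t j hj])
      have hrest2 : ∑ j ∈ (Finset.univ.erase (0 : Fin (M+2))).erase k, c j * (y t j)
          = ∑ j ∈ (Finset.univ.erase (0 : Fin (M+2))).erase k, c j * (xstar j) :=
        Finset.sum_congr rfl (fun j hj => by rw [hyrest t j hj])
      rw [hrest1, hrest2, hs0, hc0] at h
      have ht := htrig t
      rw [← ha_def, ← hb_def] at h
      simp only [hg_def, hB0]
      have e1 : 1 / 2 * (s k - 1) * b ^ 2 + c k * b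
          = 1/2 * (s k * b ^ 2) - 1/2 * b ^ 2 + c k * b := by ring
      have e2 : 1 / 2 * (s k - 1) * B t ^ 2 + c k * B t
          = 1/2 * (s k * B t ^ 2) - 1/2 * (B t) ^ 2 + c k * B t := by ring
      rw [e1, e2]
      obtain ⟨α, hα⟩ : ∃ α, A t = α := ⟨_, rfl⟩
      obtain ⟨β, hβ⟩ : ∃ β, B t = β := ⟨_, rfl⟩
      obtain ⟨a', ha'⟩ : ∃ a', a = a' := ⟨_, rfl⟩
      obtain ⟨b', hb'⟩ : ∃ b', b = b' := ⟨_, rfl⟩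
      simp only [hα, hβ, ha', hb'] at h ht ⊢
      linarith [h, ht]
    have hloc : IsLocalMin g 0 := Filter.Eventually.of_forall hglobal
    have hBd : HasDerivAt B a 0 := by
      have h1 := (Real.hasDerivAt_sin 0).const_mul a
      have h2 := (Real.hasDerivAt_cos 0).const_mul b
      have := h1.fun_add h2
      simpa [hB_def] using this
    have hgd : HasDerivAt g ((1/2) * (s k - 1) * (2 * b * a) + c k * a) 0 := by
      have h1 : HasDerivAt (fun t => (B t) ^ 2) (2 * b * a) 0 := by
        have := hBd.fun_pow 2
        simpa [hB0] using this
      have := (h1.const_mul ((1/2) * (s k - 1))).fun_add (hBd.const_mul (c k))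
      simpa [hg_def] using this
    have hzero : (1/2) * (s k - 1) * (2 * b * a) + c k * a = 0 :=
      hloc.hasDerivAt_eq_zero hgd
    have hfac : a * ((s k - 1) * b + c k) = 0 := by linarith [hzero]
    have h2 : (s k - 1) * b + c k = 0 := by
      rcases mul_eq_zero.1 hfac with h | h
      · exact absurd h ha
      · exact h
    field_simp
    linarith [h2]
  -- contradiction: 1 = a^2 + d > 1
  have hfil : ∑ j ∈ Finset.univ.filter (fun j : Fin (M+2) => j ≠ 0), (xstar j) ^ 2 = d := by
    rw [hd_def]
    apply Finset.sum_congr rfl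
    intro j hj
    have hj0 : j ≠ 0 := by simpa using (Finset.mem_filter.1 hj).2
    rw [key j hj0, div_pow, neg_sq]
  have hsplit : ∑ j, (xstar j) ^ 2
      = (xstar 0) ^ 2 + ∑ j ∈ Finset.univ.filter (fun j : Fin (M+2) => j ≠ 0), (xstar j) ^ 2 := by
    rw [Finset.filter_ne']
    exact (Finset.add_sum_erase _ _ (Finset.mem_univ (0 : Fin (M+2)))).symm
  have hapos : 0 < a ^ 2 := by positivity
  rw [hsplit, hfil] at hsph
  simp only [← ha_def] at hsph
  linarith
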